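/- Let N be a positive integer and let H ∈ M_{2N}(ℂ) be Hermitian and positive definite. Then τ₃H is diagonalizable with real nonzero eigenvalues: there exist an invertible matrix P ∈ M_{2N}(ℂ) and a diagonal matrix D with real nonzero diagonal entries such that τ₃H = P D P⁻¹. -/

import Mathlib

open Matrix
open scoped ComplexOrder

/-- `τ₃ = σ₃ ⊗ 1_N`, the 2N×2N matrix with block form [[1, 0],[0, -1]]. -/
noncomputable def tau3 (N : ℕ) : Matrix (Fin N ⊕ Fin N) (Fin N ⊕ Fin N) ℂ :=
  Matrix.fromBlocks 1 0 0 (-1)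

lemma matrix_isUnit_of_mul_eq_one {n : Type*} [Fintype n] [DecidableEq n]
    (A B : Matrix n n ℂ) (h : A * B = 1) : IsUnit A := by
  rw [Matrix.isUnit_iff_isUnit_det]
  exact IsUnit.of_mul_eq_one B.det (by rw [← Matrix.det_mul, h, Matrix.det_one])

lemma tau3_mul_tau3 (N : ℕ) : tau3 N * tau3 N = 1 := by
  simp [tau3, Matrix.fromBlocks_multiply, ← Matrix.fromBlocks_one]

lemma tau3_isHermitian (N : ℕ) : (tau3 N).IsHermitian := by
  unfold tau3
  rw [Matrix.IsHermitian, Matrix.fromBlocks_conjTranspose]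
  simp

/-- The effective BdG Hamiltonian `τ₃H` of a gapped stable free-boson system
(`H` Hermitian positive definite) is diagonalizable with real nonzero eigenvalues. -/
theorem gapped_boson_BdG_diagonalizable (N : ℕ) (hN : 0 < N)
    (H : Matrix (Fin N ⊕ Fin N) (Fin N ⊕ Fin N) ℂ)
    (hpos : H.PosDef) :
    ∃ (P D : Matrix (Fin N ⊕ Fin N) (Fin N ⊕ Fin N) ℂ),
      IsUnit P ∧
      (∃ d : Fin N ⊕ Fin N → ℝ, (∀ i, d i ≠ 0) ∧
        D = Matrix.diagonal (fun i => (d i : ℂ))) ∧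
      tau3 N * H = P * D * P⁻¹ := by
  classical
  open scoped MatrixOrder in
  set S := CFC.sqrt H with hSdef
  open scoped MatrixOrder in
  have hSH : S.IsHermitian := (CFC.sqrt_nonneg H).posSemidef.1
  open scoped MatrixOrder in
  have hSS : S * S = H := CFC.sqrt_mul_sqrt_self H hpos.posSemidef.nonneg
  -- S is invertible
  have hSunit : IsUnit S := by
    rw [Matrix.isUnit_iff_isUnit_det]
    have : S.det * S.det = H.det := by rw [← Matrix.det_mul, hSS]
    have hHdet : IsUnit H.det := (Matrix.isUnit_iff_isUnit_det H).mp hpos.isUnit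
    exact isUnit_of_mul_isUnit_left (this ▸ hHdet)
  -- τ₃ is invertible
  have htau : IsUnit (tau3 N) := matrix_isUnit_of_mul_eq_one _ _ (tau3_mul_tau3 N)
  -- M := S τ₃ S is Hermitian and invertible
  set M := S * tau3 N * S with hMdef
  have hMH : M.IsHermitian := by
    rw [Matrix.IsHermitian, hMdef, Matrix.conjTranspose_mul, Matrix.conjTranspose_mul,
      hSH.eq, (tau3_isHermitian N).eq, mul_assoc]
  have hMunit : IsUnit M := (hSunit.mul htau).mul hSunit
  -- eigenvalues of M are nonzero
  have hdet : M.det ≠ 0 := by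
    intro h
    exact (M.isUnit_iff_isUnit_det.mp hMunit).ne_zero h
  have heig : ∀ i, hMH.eigenvalues i ≠ 0 := by
    intro i hi
    apply hdet
    rw [hMH.det_eq_prod_eigenvalues]
    exact Finset.prod_eq_zero (Finset.mem_univ i) (by rw [hi]; simp)
  set U : Matrix (Fin N ⊕ Fin N) (Fin N ⊕ Fin N) ℂ := (hMH.eigenvectorUnitary : Matrix (Fin N ⊕ Fin N) (Fin N ⊕ Fin N) ℂ) with hUdef
  have hUU : star U * U = 1 := Matrix.mem_unitaryGroup_iff'.mp hMH.eigenvectorUnitary.2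
  have hUU' : U * star U = 1 := Matrix.mem_unitaryGroup_iff.mp hMH.eigenvectorUnitary.2
  have hUunit : IsUnit U := matrix_isUnit_of_mul_eq_one _ _ hUU'
  have hUinv : U⁻¹ = star U := Matrix.inv_eq_left_inv hUU
  refine ⟨S⁻¹ * U, Matrix.diagonal (RCLike.ofReal ∘ hMH.eigenvalues), ?_, ?_, ?_⟩
  · have : IsUnit S⁻¹ := matrix_isUnit_of_mul_eq_one _ S
        (S.nonsing_inv_mul (S.isUnit_iff_isUnit_det.mp hSunit))
    exact this.mul hUunit
  · exact ⟨hMH.eigenvalues, heig, rfl⟩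
  · have hspec := hMH.spectral_theorem
    rw [Unitary.conjStarAlgAut_apply] at hspec
    have hinv : (S⁻¹ * U)⁻¹ = star U * S := by
      rw [Matrix.mul_inv_rev, hUinv, S.nonsing_inv_nonsing_inv (S.isUnit_iff_isUnit_det.mp hSunit)]
    rw [hinv]
    calc tau3 N * H = (S⁻¹ * S) * tau3 N * (S * S) := by
          rw [S.nonsing_inv_mul (S.isUnit_iff_isUnit_det.mp hSunit), one_mul, hSS]
      _ = S⁻¹ * M * S := by rw [hMdef]; noncomm_ring
      _ = S⁻¹ * (U * Matrix.diagonal (RCLike.ofReal ∘ hMH.eigenvalues) * star U) * S := by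
          rw [← hspec]
      _ = S⁻¹ * U * Matrix.diagonal (RCLike.ofReal ∘ hMH.eigenvalues) * (star U * S) := by
          noncomm_ring
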